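/- arXiv:1811.06617 — 4 statements merged into one kernel-verified Lean document; each statement's English description precedes it below -/
import Mathlib

section
/- Let φ: ℝ → ℝ be Borel measurable with 0 ≤ φ(s) ≤ π for all s, let r > 0 and α ∈ [0, π/2), and suppose that ∫_{−∞}^{0} φ(s)/(r² + 2rs·sin α + s²) ds = ∫_{0}^{∞} φ(s)/(r² + 2rs·sin α + s²) ds (both integrals being finite). Then ∫_{−∞}^{∞} φ(s)/(r² + 2rs·sin α + s²) ds ≤ π²/r. -/
open MeasureTheory Real Set Filter

theorem stmt_7 (φ : ℝ → ℝ) (hm : Measurable φ)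
    (hb : ∀ s : ℝ, 0 ≤ φ s ∧ φ s ≤ Real.pi)
    (r α : ℝ) (hr : 0 < r) (hα : α ∈ Set.Ico 0 (Real.pi / 2))
    (hi1 : MeasureTheory.IntegrableOn
      (fun s : ℝ => φ s / (r^2 + 2 * r * s * Real.sin α + s^2)) (Set.Iio 0))
    (hi2 : MeasureTheory.IntegrableOn
      (fun s : ℝ => φ s / (r^2 + 2 * r * s * Real.sin α + s^2)) (Set.Ioi 0))
    (heq : (∫ s in Set.Iio (0 : ℝ), φ s / (r^2 + 2 * r * s * Real.sin α + s^2))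
      = ∫ s in Set.Ioi (0 : ℝ), φ s / (r^2 + 2 * r * s * Real.sin α + s^2)) :
    ∫ s : ℝ, φ s / (r^2 + 2 * r * s * Real.sin α + s^2) ≤ Real.pi^2 / r := by
  have hπ := Real.pi_pos
  obtain ⟨hα0, hα2⟩ := hα
  have hcos : 0 < Real.cos α :=
    Real.cos_pos_of_mem_Ioo ⟨by linarith, hα2⟩
  set a := r * Real.sin α with ha
  set b := r * Real.cos α with hbdef
  have hb0 : 0 < b := mul_pos hr hcos
  have hden : ∀ s : ℝ, r^2 + 2 * r * s * Real.sin α + s^2 = (s + a)^2 + b^2 := by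
    intro s
    have h := Real.sin_sq_add_cos_sq α
    simp only [ha, hbdef]
    nlinarith [h]
  set g : ℝ → ℝ := fun s => ((s + a)^2 + b^2)⁻¹ with hg
  have hgpos : ∀ s : ℝ, 0 < (s + a)^2 + b^2 := fun s => by positivity
  -- rewrite f as φ * g
  have hfg : (fun s : ℝ => φ s / (r^2 + 2 * r * s * Real.sin α + s^2))
      = fun s => φ s * g s := by
    funext s; rw [hden s, div_eq_mul_inv]
  rw [hfg] at hi1 hi2 heq ⊢
  -- integrability of g
  have hgi : Integrable g := by
    have h1 : Integrable (fun x : ℝ => (1 + (x / b)^2)⁻¹) :=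
      integrable_inv_one_add_sq.comp_div hb0.ne'
    have h2 : Integrable (fun x : ℝ => (1 + ((x + a) / b)^2)⁻¹) := h1.comp_add_right a
    have h3 := h2.const_mul (b^2)⁻¹
    have he : (fun s : ℝ => (b^2)⁻¹ * (1 + ((s + a) / b)^2)⁻¹) = g := by
      funext s
      simp only [hg]
      rw [← mul_inv]
      congr 1
      field_simp
      ring
    rwa [he] at h3
  -- value of ∫ g on Ioi 0
  have harct : Real.arctan (a / b) = α := by
    have : a / b = Real.tan α := by
      rw [Real.tan_eq_sin_div_cos, ha, hbdef]
      field_simp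
    rw [this, Real.arctan_tan (by linarith) hα2]
  have hIg : ∫ s in Set.Ioi (0:ℝ), g s = (Real.pi / 2 - α) / b := by
    have hderiv : ∀ x ∈ Set.Ici (0:ℝ),
        HasDerivAt (fun x : ℝ => b⁻¹ * Real.arctan ((x + a) / b)) (g x) x := by
      intro x _
      have h1 : HasDerivAt (fun x : ℝ => (x + a) / b) (1 / b) x :=
        ((hasDerivAt_id x).add_const a).div_const b
      have h2 := (Real.hasDerivAt_arctan ((x + a) / b)).comp x h1
      have h3 := h2.const_mul b⁻¹
      convert h3 using 1
      rfl
      rfl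
      rfl
      simp only [hg, Function.comp]
      rw [eq_comm]
      field_simp
      ring
    have htend : Tendsto (fun x : ℝ => b⁻¹ * Real.arctan ((x + a) / b)) atTop
        (nhds (b⁻¹ * (Real.pi / 2))) := by
      apply Tendsto.const_mul
      apply (tendsto_nhds_of_tendsto_nhdsWithin Real.tendsto_arctan_atTop).comp
      exact (tendsto_atTop_add_const_right _ a tendsto_id).atTop_div_const hb0
    have := integral_Ioi_of_hasDerivAt_of_tendsto' hderiv hgi.integrableOn htend
    rw [this]
    simp only [zero_add, harct]
    field_simp
  -- bound the Ioi integral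
  have hmono : ∫ s in Set.Ioi (0:ℝ), φ s * g s
      ≤ ∫ s in Set.Ioi (0:ℝ), Real.pi * g s := by
    apply setIntegral_mono_on hi2 ((hgi.const_mul Real.pi).integrableOn) measurableSet_Ioi
    intro s _
    exact mul_le_mul_of_nonneg_right (hb s).2 (le_of_lt (by positivity))
  rw [MeasureTheory.integral_const_mul, hIg] at hmono
  -- split the whole-line integral
  have hint : Integrable (fun s => φ s * g s) := by
    have := hi1.union hi2
    rwa [Set.Iio_union_Ioi, IntegrableOn, MeasureTheory.restrict_compl_singleton] at this
  have hsplit : ∫ s : ℝ, φ s * g s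
      = (∫ s in Set.Iio (0:ℝ), φ s * g s) + ∫ s in Set.Ioi (0:ℝ), φ s * g s := by
    rw [← setIntegral_union ((Set.Iic_disjoint_Ioi le_rfl).mono_left Set.Iio_subset_Iic_self) measurableSet_Ioi hi1 hi2,
      Set.Iio_union_Ioi]
    conv_lhs => rw [← MeasureTheory.restrict_compl_singleton (μ := (volume : MeasureTheory.Measure ℝ)) (0:ℝ)]
  rw [hsplit, heq]
  -- final numeric bound
  have hjord : Real.pi / 2 - α ≤ Real.pi / 2 * Real.cos α := by
    have hj := Real.one_sub_mul_le_cos hα0 hα2.le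
    have := mul_le_mul_of_nonneg_left hj (le_of_lt (half_pos hπ))
    have he : Real.pi / 2 * (1 - 2 / Real.pi * α) = Real.pi / 2 - α := by
      field_simp
    linarith [he ▸ this]
  have hfinal : Real.pi * ((Real.pi / 2 - α) / b) + Real.pi * ((Real.pi / 2 - α) / b)
      ≤ Real.pi ^ 2 / r := by
    have h1 : Real.pi * ((Real.pi / 2 - α) / b) + Real.pi * ((Real.pi / 2 - α) / b)
        = Real.pi * (Real.pi - 2 * α) / b := by field_simp; ring
    rw [h1, div_le_div_iff₀ hb0 hr, hbdef]
    nlinarith [mul_le_mul_of_nonneg_left hjord (by positivity : (0:ℝ) ≤ 2 * Real.pi * r)]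
  calc (∫ s in Set.Ioi (0:ℝ), φ s * g s) + ∫ s in Set.Ioi (0:ℝ), φ s * g s
      ≤ Real.pi * ((Real.pi / 2 - α) / b) + Real.pi * ((Real.pi / 2 - α) / b) :=
        add_le_add hmono hmono
    _ ≤ Real.pi ^ 2 / r := hfinal
end

section
/- For all complex a and b with Re a > 0 and Re b > 0, the improper integral ∫_0^∞ (e^{−at} − e^{−bt})/t dt converges and equals Log(b/a), where Log is the principal branch of the complex logarithm. -/
open MeasureTheory Set Filter Topology

namespace Frullani9

lemma cexp_integrableOn {c : ℂ} (hc : 0 < c.re) :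
    IntegrableOn (fun t : ℝ => Complex.exp (-c * t)) (Set.Ioi 0) := by
  refine (exp_neg_integrableOn_Ioi 0 hc).mono' ?_ ?_
  · exact (Complex.continuous_exp.comp (by fun_prop)).aestronglyMeasurable
  · filter_upwards with t
    simp only [Complex.norm_exp]
    simp [Complex.mul_re]

lemma hasDerivAt_cexp (c : ℂ) (t : ℝ) :
    HasDerivAt (fun t : ℝ => Complex.exp (-c * t)) (Complex.exp (-c * t) * (-c)) t := by
  have h0 : HasDerivAt (fun t : ℝ => (t : ℂ)) 1 t := by
    simpa using (hasDerivAt_id t).ofReal_comp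
  simpa using (h0.const_mul (-c)).cexp

lemma cexp_integral {c : ℂ} (hc : 0 < c.re) :
    (∫ t in Set.Ioi (0:ℝ), Complex.exp (-c * t)) = c⁻¹ := by
  have hc0 : c ≠ 0 := fun h => by simp [h] at hc
  have hd : ∀ t ∈ Set.Ioi (0:ℝ),
      HasDerivAt (fun t : ℝ => -c⁻¹ * Complex.exp (-c * t)) (Complex.exp (-c * t)) t := by
    intro t _
    have := (hasDerivAt_cexp c t).const_mul (-c⁻¹)
    convert this using 1
    · rfl
    field_simp
  have htend : Tendsto (fun t : ℝ => -c⁻¹ * Complex.exp (-c * t)) atTop (𝓝 0) := by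
    rw [tendsto_zero_iff_norm_tendsto_zero]
    have h1 : Tendsto (fun t : ℝ => Real.exp (-c.re * t)) atTop (𝓝 0) := by
      apply Real.tendsto_exp_atBot.comp
      exact tendsto_id.const_mul_atTop_of_neg (neg_neg_iff_pos.2 hc)
    have heq : (fun t : ℝ => ‖-c⁻¹ * Complex.exp (-c * t)‖)
        = fun t : ℝ => ‖c⁻¹‖ * Real.exp (-c.re * t) := by
      funext t
      simp only [norm_mul, norm_neg, Complex.norm_exp]
      congr 2
      simp [Complex.mul_re]
    rw [heq]
    simpa using h1.const_mul ‖c⁻¹‖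
  have hcont : ContinuousWithinAt (fun t : ℝ => -c⁻¹ * Complex.exp (-c * t)) (Set.Ici 0) 0 :=
    Continuous.continuousWithinAt (by fun_prop)
  have := integral_Ioi_of_hasDerivAt_of_tendsto hcont hd (cexp_integrableOn hc) htend
  rw [this]
  simp

lemma seg_rep (a b : ℂ) {t : ℝ} (ht : t ≠ 0) :
    (Complex.exp (-a * t) - Complex.exp (-b * t)) / t
      = (b - a) * ∫ u in (0:ℝ)..1, Complex.exp (-(a + u * (b - a)) * t) := by
  rcases eq_or_ne b a with rfl | hba
  · simp
  have hba' : b - a ≠ 0 := sub_ne_zero.2 hba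
  have ht' : (t : ℂ) ≠ 0 := Complex.ofReal_ne_zero.2 ht
  have hne : (b - a) * t ≠ 0 := mul_ne_zero hba' ht'
  have key : ∫ u in (0:ℝ)..1, Complex.exp (-(a + u * (b - a)) * t)
      = (fun u : ℝ => -((b - a) * t)⁻¹ * Complex.exp (-(a + u * (b - a)) * t)) 1
        - (fun u : ℝ => -((b - a) * t)⁻¹ * Complex.exp (-(a + u * (b - a)) * t)) 0 := by
    apply intervalIntegral.integral_eq_sub_of_hasDerivAt
      (f := fun u : ℝ => -((b - a) * t)⁻¹ * Complex.exp (-(a + u * (b - a)) * t))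
    · intro u _
      have h0 : HasDerivAt (fun u : ℝ => (u : ℂ)) 1 u := by
        simpa using (hasDerivAt_id u).ofReal_comp
      have h1 : HasDerivAt (fun u : ℝ => -(a + (u : ℂ) * (b - a)) * t) (-((b - a) * t)) u := by
        have := (((h0.mul_const (b - a)).const_add a).neg).mul_const (t : ℂ)
        convert this using 1
        · rfl
        · funext y
          simp only [Pi.neg_apply]
        ring
      have := (h1.cexp).const_mul (-((b - a) * t)⁻¹)
      convert this using 1
      · rfl
      field_simp
    · apply Continuous.intervalIntegrable
      exact Complex.continuous_exp.comp (by fun_prop)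
  rw [key]
  simp only
  push_cast
  field_simp
  ring

lemma re_seg (a b : ℂ) (u : ℝ) :
    (a + (u : ℂ) * (b - a)).re = a.re + u * (b.re - a.re) := by
  simp [Complex.add_re, Complex.mul_re, Complex.sub_re]

lemma min_le_re_seg {u : ℝ} (hu0 : 0 ≤ u) (hu1 : u ≤ 1) (a b : ℂ) :
    min a.re b.re ≤ (a + (u : ℂ) * (b - a)).re := by
  rw [re_seg]
  rcases le_total a.re b.re with h | h
  · nlinarith [min_le_left a.re b.re, mul_nonneg hu0 (sub_nonneg.2 h)]
  · nlinarith [min_le_right a.re b.re,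
      mul_nonneg (sub_nonneg.2 hu1) (sub_nonneg.2 h)]

lemma re_pos_seg {u : ℝ} (hu0 : 0 ≤ u) (hu1 : u ≤ 1) (a b : ℂ)
    (ha : 0 < a.re) (hb : 0 < b.re) : 0 < (a + (u : ℂ) * (b - a)).re :=
  lt_of_lt_of_le (lt_min ha hb) (min_le_re_seg hu0 hu1 a b)

lemma log_div_eq (a b : ℂ) (ha : 0 < a.re) (hb : 0 < b.re) :
    Complex.log (b / a) = Complex.log b - Complex.log a := by
  have ha0 : a ≠ 0 := fun h => by simp [h] at ha
  have hb0 : b ≠ 0 := fun h => by simp [h] at hb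
  have hargb1 : Complex.arg b < Real.pi / 2 :=
    Complex.arg_lt_pi_div_two_iff.2 (Or.inl hb)
  have hargb2 : -(Real.pi / 2) < Complex.arg b :=
    Complex.neg_pi_div_two_lt_arg_iff.2 (Or.inl hb)
  have harga1 : Complex.arg a < Real.pi / 2 :=
    Complex.arg_lt_pi_div_two_iff.2 (Or.inl ha)
  have harga2 : -(Real.pi / 2) < Complex.arg a :=
    Complex.neg_pi_div_two_lt_arg_iff.2 (Or.inl ha)
  have hapi : Complex.arg a ≠ Real.pi := by
    intro h
    have := Complex.arg_eq_pi_iff.1 h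
    linarith [this.1]
  have hainv : Complex.arg a⁻¹ = -Complex.arg a := by
    rw [Complex.arg_inv]; simp [hapi]
  have hcond : Complex.arg b + Complex.arg a⁻¹ ∈ Set.Ioc (-Real.pi) Real.pi := by
    rw [hainv]
    constructor
    · linarith
    · linarith [Real.pi_pos]
  rw [div_eq_mul_inv, Complex.log_mul hb0 (inv_ne_zero ha0) hcond, Complex.log_inv a hapi,
    sub_eq_add_neg]

theorem main (a b : ℂ) (ha : 0 < a.re) (hb : 0 < b.re) :
    MeasureTheory.IntegrableOn
      (fun t : ℝ => (Complex.exp (-a * t) - Complex.exp (-b * t)) / (t : ℂ)) (Set.Ioi 0) ∧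
    (∫ t in Set.Ioi (0 : ℝ), (Complex.exp (-a * t) - Complex.exp (-b * t)) / (t : ℂ))
      = Complex.log (b / a) := by
  have hm0 : 0 < min a.re b.re := lt_min ha hb
  -- pointwise bound
  have hbound : ∀ t ∈ Set.Ioi (0:ℝ),
      ‖(Complex.exp (-a * t) - Complex.exp (-b * t)) / (t : ℂ)‖
        ≤ ‖b - a‖ * Real.exp (-(min a.re b.re) * t) := by
    intro t ht
    have ht' : (0:ℝ) < t := ht
    rw [seg_rep a b ht'.ne', norm_mul]
    gcongr
    refine le_trans (intervalIntegral.norm_integral_le_of_norm_le_const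
      (C := Real.exp (-(min a.re b.re) * t)) ?_) (by norm_num)
    intro u hu
    rw [Set.uIoc_of_le zero_le_one] at hu
    simp only [Complex.norm_exp]
    rw [Real.exp_le_exp]
    have hre : (-(a + (u : ℂ) * (b - a)) * (t : ℂ)).re
        = -(a + (u : ℂ) * (b - a)).re * t := by
      simp [Complex.mul_re]
    rw [hre]
    have h1 := min_le_re_seg hu.1.le hu.2 a b
    nlinarith
  -- integrability
  have hint : MeasureTheory.IntegrableOn
      (fun t : ℝ => (Complex.exp (-a * t) - Complex.exp (-b * t)) / (t : ℂ)) (Set.Ioi 0) := by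
    refine ((exp_neg_integrableOn_Ioi 0 hm0).const_mul ‖b - a‖).mono' ?_ ?_
    · apply ContinuousOn.aestronglyMeasurable _ measurableSet_Ioi
      apply ContinuousOn.div
      · exact Continuous.continuousOn (by fun_prop)
      · exact Complex.continuous_ofReal.continuousOn
      · intro t ht
        exact Complex.ofReal_ne_zero.2 (ne_of_gt ht)
    · exact (ae_restrict_iff' measurableSet_Ioi).2 (Filter.Eventually.of_forall hbound)
  refine ⟨hint, ?_⟩
  -- now the value
  have step1 : (∫ t in Set.Ioi (0:ℝ), (Complex.exp (-a * t) - Complex.exp (-b * t)) / (t : ℂ))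
      = ∫ t in Set.Ioi (0:ℝ),
          (b - a) * ∫ u in Set.Ioc (0:ℝ) 1, Complex.exp (-(a + u * (b - a)) * t) := by
    apply setIntegral_congr_fun measurableSet_Ioi
    intro t ht
    dsimp only
    rw [seg_rep a b (ne_of_gt ht), intervalIntegral.integral_of_le zero_le_one]
  rw [step1, MeasureTheory.integral_const_mul]
  -- Fubini
  have hprodInt : Integrable (fun p : ℝ × ℝ => Complex.exp (-(a + p.2 * (b - a)) * p.1))
      ((volume.restrict (Set.Ioi (0:ℝ))).prod (volume.restrict (Set.Ioc (0:ℝ) 1))) := by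
    have hg : Integrable (fun p : ℝ × ℝ => Real.exp (-(min a.re b.re) * p.1) * (1:ℝ))
        ((volume.restrict (Set.Ioi (0:ℝ))).prod (volume.restrict (Set.Ioc (0:ℝ) 1))) :=
      Integrable.mul_prod (exp_neg_integrableOn_Ioi 0 hm0) (integrable_const 1)
    refine hg.mono' ?_ ?_
    · exact (Complex.continuous_exp.comp (by fun_prop)).aestronglyMeasurable
    · rw [Measure.prod_restrict]
      refine (ae_restrict_iff' (measurableSet_Ioi.prod measurableSet_Ioc)).2 ?_
      filter_upwards with p hp
      rcases hp with ⟨hp1, hp2⟩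
      simp only [Complex.norm_exp, mul_one]
      rw [Real.exp_le_exp]
      have hre : (-(a + (p.2 : ℂ) * (b - a)) * (p.1 : ℂ)).re
          = -(a + (p.2 : ℂ) * (b - a)).re * p.1 := by
        simp [Complex.mul_re]
      rw [hre]
      have h1 := min_le_re_seg hp2.1.le hp2.2 a b
      have h2 : (0:ℝ) < p.1 := hp1
      nlinarith
  have swap : (∫ t in Set.Ioi (0:ℝ),
        ∫ u in Set.Ioc (0:ℝ) 1, Complex.exp (-(a + u * (b - a)) * t))
      = ∫ u in Set.Ioc (0:ℝ) 1,
          ∫ t in Set.Ioi (0:ℝ), Complex.exp (-(a + u * (b - a)) * t) :=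
    MeasureTheory.integral_integral_swap hprodInt
  rw [swap]
  have step2 : (∫ u in Set.Ioc (0:ℝ) 1,
        ∫ t in Set.Ioi (0:ℝ), Complex.exp (-(a + u * (b - a)) * t))
      = ∫ u in Set.Ioc (0:ℝ) 1, (a + (u : ℂ) * (b - a))⁻¹ := by
    apply setIntegral_congr_fun measurableSet_Ioc
    intro u hu
    exact cexp_integral (re_pos_seg hu.1.le hu.2 a b ha hb)
  rw [step2]
  -- FTC for log
  have ftc : (∫ u in (0:ℝ)..1, (b - a) * (a + (u : ℂ) * (b - a))⁻¹)
      = Complex.log (a + ((1:ℝ) : ℂ) * (b - a)) - Complex.log (a + ((0:ℝ) : ℂ) * (b - a)) := by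
    apply intervalIntegral.integral_eq_sub_of_hasDerivAt
      (f := fun u : ℝ => Complex.log (a + (u : ℂ) * (b - a)))
    · intro u hu
      rw [Set.uIcc_of_le zero_le_one] at hu
      have hslit : a + (u : ℂ) * (b - a) ∈ Complex.slitPlane :=
        Complex.mem_slitPlane_iff.2 (Or.inl (re_pos_seg hu.1 hu.2 a b ha hb))
      have h0 : HasDerivAt (fun u : ℝ => (u : ℂ)) 1 u := by
        simpa using (hasDerivAt_id u).ofReal_comp
      have h1 : HasDerivAt (fun u : ℝ => a + (u : ℂ) * (b - a)) (b - a) u := by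
        simpa using ((h0.mul_const (b - a)).const_add a)
      have := h1.clog_real hslit
      simpa [div_eq_mul_inv, mul_comm] using this
    · apply ContinuousOn.intervalIntegrable
      apply ContinuousOn.mul continuousOn_const
      apply ContinuousOn.inv₀
      · exact Continuous.continuousOn (by fun_prop)
      · intro u hu
        rw [Set.uIcc_of_le zero_le_one] at hu
        intro h
        have := re_pos_seg hu.1 hu.2 a b ha hb
        rw [h] at this
        simp at this
  have step3 : (∫ u in Set.Ioc (0:ℝ) 1, (a + (u : ℂ) * (b - a))⁻¹)
      = ∫ u in (0:ℝ)..1, (a + (u : ℂ) * (b - a))⁻¹ :=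
    (intervalIntegral.integral_of_le zero_le_one).symm
  rw [step3, ← intervalIntegral.integral_const_mul, ftc, log_div_eq a b ha hb]
  norm_num

end Frullani9

theorem stmt_9 (a b : ℂ) (ha : 0 < a.re) (hb : 0 < b.re) :
    MeasureTheory.IntegrableOn
      (fun t : ℝ => (Complex.exp (-a * t) - Complex.exp (-b * t)) / (t : ℂ)) (Set.Ioi 0) ∧
    (∫ t in Set.Ioi (0 : ℝ), (Complex.exp (-a * t) - Complex.exp (-b * t)) / (t : ℂ))
      = Complex.log (b / a) := by
  exact Frullani9.main a b ha hb
end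

section
/- If f: H → ℂ is a Rogers function (holomorphic on the right half-plane H with Re(f(ξ)/ξ) ≥ 0 on H) and f is not identically zero, then f has no zeroes in H, and ξ ↦ ξ²/f(ξ) is again a Rogers function. -/
theorem stmt_16 (f : ℂ → ℂ)
    (hf : DifferentiableOn ℂ f {ξ : ℂ | 0 < ξ.re})
    (hr : ∀ ξ ∈ {ξ : ℂ | 0 < ξ.re}, 0 ≤ (f ξ / ξ).re)
    (hnz : ∃ ξ ∈ {ξ : ℂ | 0 < ξ.re}, f ξ ≠ 0) :
    (∀ ξ ∈ {ξ : ℂ | 0 < ξ.re}, f ξ ≠ 0) ∧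
    DifferentiableOn ℂ (fun ξ : ℂ => ξ^2 / f ξ) {ξ : ℂ | 0 < ξ.re} ∧
    (∀ ξ ∈ {ξ : ℂ | 0 < ξ.re}, 0 ≤ ((ξ^2 / f ξ) / ξ).re) := by
  set U : Set ℂ := {ξ : ℂ | 0 < ξ.re} with hU
  have hUopen : IsOpen U := isOpen_lt continuous_const Complex.continuous_re
  have hUpre : IsPreconnected U := (convex_halfSpace_re_gt 0).isPreconnected
  have hne : ∀ ξ ∈ U, ξ ≠ 0 := by
    intro ξ hξ h
    simp only [hU, Set.mem_setOf_eq, h, Complex.zero_re] at hξ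
    exact lt_irrefl 0 hξ
  set g : ℂ → ℂ := fun ξ => f ξ / ξ with hg
  have hgd : DifferentiableOn ℂ g U := hf.div differentiableOn_id hne
  have h1 : ∀ ξ ∈ U, (1 : ℂ) + g ξ ≠ 0 := by
    intro ξ hξ h
    have h2 := hr ξ hξ
    have h3 : ((1 : ℂ) + g ξ).re = 1 + (g ξ).re := by simp
    rw [h] at h3
    simp only [Complex.zero_re] at h3
    have : (g ξ).re = -1 := by linarith
    rw [hg] at this; simp only at this; rw [this] at h2; linarith
  have hhd : DifferentiableOn ℂ (fun ξ => (1 - g ξ) / (1 + g ξ)) U :=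
    ((differentiableOn_const 1).sub hgd).div ((differentiableOn_const 1).add hgd) h1
  have hb : ∀ ξ ∈ U, ‖(1 - g ξ) / (1 + g ξ)‖ ≤ 1 := by
    intro ξ hξ
    rw [norm_div, div_le_one (norm_pos_iff.mpr (h1 ξ hξ))]
    have h2 := hr ξ hξ
    have hsq : ‖1 - g ξ‖ ^ 2 ≤ ‖1 + g ξ‖ ^ 2 := by
      rw [Complex.sq_norm, Complex.sq_norm]
      simp only [Complex.normSq_apply]
      simp only [Complex.normSq_apply, Complex.add_re, Complex.add_im, Complex.sub_re,
        Complex.sub_im, Complex.one_re, Complex.one_im]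
      have : 0 ≤ (g ξ).re := h2
      nlinarith
    nlinarith [norm_nonneg (1 - g ξ), norm_nonneg (1 + g ξ)]
  -- main claim: f has no zeroes in U
  have hnozero : ∀ ξ ∈ U, f ξ ≠ 0 := by
    intro ξ₀ hξ₀ hfz
    obtain ⟨ξ₁, hξ₁, hf1⟩ := hnz
    have hg0 : g ξ₀ = 0 := by simp [hg, hfz]
    have hmax : IsMaxOn (norm ∘ fun ξ => (1 - g ξ) / (1 + g ξ)) U ξ₀ := by
      intro x hx
      simp only [Function.comp_apply, hg0]
      calc ‖(1 - g x) / (1 + g x)‖ ≤ 1 := hb x hx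
        _ = ‖(1 - (0:ℂ)) / (1 + 0)‖ := by norm_num
    have heq := Complex.eqOn_of_isPreconnected_of_isMaxOn_norm hUpre hUopen hhd hξ₀ hmax
    have h2 := heq hξ₁
    simp only [Function.const_apply, hg0, sub_zero, add_zero, div_one] at h2
    -- h2 : (1 - g ξ₁) / (1 + g ξ₁) = 1
    have h3 : (1 : ℂ) - g ξ₁ = 1 + g ξ₁ := by
      rw [div_eq_one_iff_eq (h1 ξ₁ hξ₁)] at h2
      exact h2
    have h4 : g ξ₁ = 0 := by linear_combination (-1/2 : ℂ) * h3
    have h5 : f ξ₁ / ξ₁ = 0 := h4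
    exact hf1 ((div_eq_zero_iff.mp h5).resolve_right (hne ξ₁ hξ₁))
  refine ⟨hnozero, ?_, ?_⟩
  · exact (differentiableOn_id.pow 2).div hf hnozero
  · intro ξ hξ
    have hξ0 := hne ξ hξ
    have hf0 := hnozero ξ hξ
    have key : (ξ ^ 2 / f ξ) / ξ = (f ξ / ξ)⁻¹ := by
      field_simp
    rw [key, Complex.inv_re]
    exact div_nonneg (hr ξ hξ) (Complex.normSq_nonneg _)
end

section
/- Let f be holomorphic on the right half-plane H with Re(f(ξ)/ξ) ≥ 0 on H (a Rogers function), and let g be holomorphic on ℂ ∖ (−∞, 0] with g((0,∞)) ⊆ [0,∞) and Im g(ξ) ≥ 0 whenever Im ξ > 0 (a complete Bernstein function). Assume f is non-degenerate, i.e. f(H) ⊆ ℂ ∖ (−∞, 0]. Then the composition ξ ↦ g(f(ξ)) is a Rogers function on H. -/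
open Complex Set Filter Topology

local notation "conj'" => (starRingEnd ℂ)

lemma my_preconn : IsPreconnected Complex.slitPlane := by
  have h := Complex.starConvex_one_slitPlane
  have : ContractibleSpace Complex.slitPlane := h.contractibleSpace ⟨1, Complex.one_mem_slitPlane⟩
  rw [isPreconnected_iff_preconnectedSpace]
  infer_instance

lemma my_conj_mem {z : ℂ} (hz : z ∈ Complex.slitPlane) : conj' z ∈ Complex.slitPlane := by
  rw [Complex.mem_slitPlane_iff] at hz ⊢
  simpa using hz

lemma my_conj_deriv {g : ℂ → ℂ} {c w : ℂ} (h : HasDerivAt g c w) :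
    HasDerivAt (fun z => conj' (g (conj' z))) (conj' c) (conj' w) := by
  rw [hasDerivAt_iff_tendsto_slope] at h ⊢
  have hct : Tendsto conj' (𝓝[≠] (conj' w)) (𝓝[≠] w) := by
    refine tendsto_nhdsWithin_of_tendsto_nhds_of_eventually_within _ ?_ ?_
    · have : Tendsto conj' (𝓝 (conj' w)) (𝓝 (conj' (conj' w))) :=
        (Complex.continuous_conj.tendsto _)
      simpa using this.mono_left nhdsWithin_le_nhds
    · filter_upwards [self_mem_nhdsWithin] with z hz
      simp only [mem_compl_iff, mem_singleton_iff] at hz ⊢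
      intro hcon
      apply hz
      have := congrArg conj' hcon
      simpa using this
  have h2 : Tendsto (fun z => conj' (slope g w (conj' z))) (𝓝[≠] (conj' w)) (𝓝 (conj' c)) :=
    (Complex.continuous_conj.tendsto c).comp (h.comp hct)
  refine h2.congr' ?_
  filter_upwards [self_mem_nhdsWithin] with z hz
  simp only [mem_compl_iff, mem_singleton_iff] at hz
  rw [slope_def_field, slope_def_field]
  simp [map_div₀, map_sub, Complex.conj_conj]

lemma my_re_div (u v : ℂ) (hu : u ≠ 0) (hv : v ≠ 0) :
    (u / v).re = (‖u‖ / ‖v‖) * Real.cos (u.arg - v.arg) := by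
  conv_lhs => rw [← Complex.norm_mul_exp_arg_mul_I u, ← Complex.norm_mul_exp_arg_mul_I v]
  rw [mul_div_mul_comm, ← Complex.exp_sub, ← Complex.ofReal_div,
    ← sub_mul, ← Complex.ofReal_sub, Complex.exp_mul_I,
    ← Complex.ofReal_cos, ← Complex.ofReal_sin]
  simp only [Complex.mul_re, Complex.add_re, Complex.add_im, Complex.mul_im, Complex.I_re,
    Complex.I_im, Complex.ofReal_re, Complex.ofReal_im]
  ring

section
variable {g : ℂ → ℂ}
  (hg : DifferentiableOn ℂ g Complex.slitPlane)
  (hgpos : ∀ x : ℝ, 0 < x → (g (x : ℂ)).im = 0 ∧ 0 ≤ (g (x : ℂ)).re)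
  (hgim : ∀ ξ : ℂ, 0 < ξ.im → 0 ≤ (g ξ).im)

include hg hgpos in
lemma my_refl : ∀ z ∈ Complex.slitPlane, g (conj' z) = conj' (g z) := by
  have hgt : DifferentiableOn ℂ (fun z => conj' (g (conj' z))) Complex.slitPlane := by
    intro z hz
    have hz' : conj' z ∈ Complex.slitPlane := my_conj_mem hz
    have hd : HasDerivAt g (deriv g (conj' z)) (conj' z) :=
      ((hg.differentiableAt (Complex.isOpen_slitPlane.mem_nhds hz')).hasDerivAt)
    have := my_conj_deriv hd
    rw [Complex.conj_conj] at this
    exact this.differentiableAt.differentiableWithinAt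
  have han1 : AnalyticOnNhd ℂ (fun z => conj' (g (conj' z))) Complex.slitPlane :=
    hgt.analyticOnNhd Complex.isOpen_slitPlane
  have han2 : AnalyticOnNhd ℂ g Complex.slitPlane := hg.analyticOnNhd Complex.isOpen_slitPlane
  have heq : EqOn (fun z => conj' (g (conj' z))) g Complex.slitPlane := by
    apply han1.eqOn_of_preconnected_of_frequently_eq han2 my_preconn Complex.one_mem_slitPlane
    have ht : Tendsto (fun n : ℕ => ((1 + 1/(n+1) : ℝ) : ℂ)) atTop (𝓝[≠] 1) := by
      apply tendsto_nhdsWithin_of_tendsto_nhds_of_eventually_within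
      · have : Tendsto (fun n : ℕ => (1 + 1/(n+1) : ℝ)) atTop (𝓝 1) := by
          have h0 : Tendsto (fun n : ℕ => 1/(n+1 : ℝ)) atTop (𝓝 0) :=
            tendsto_one_div_add_atTop_nhds_zero_nat
          simpa using (tendsto_const_nhds.add h0)
        have h2 := (Complex.continuous_ofReal.tendsto 1).comp this
        simp only [Function.comp_def] at h2
        exact_mod_cast h2
      · filter_upwards with n
        simp only [mem_compl_iff, mem_singleton_iff]
        intro hcon
        have : (1 + 1/(n+1) : ℝ) = 1 := by exact_mod_cast hcon
        have hpos : (0:ℝ) < 1/(n+1) := by positivity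
        linarith
    apply ht.frequently
    apply Frequently.of_forall
    intro n
    have hpos : (0:ℝ) < 1 + 1/(n+1) := by positivity
    have him : (g ((1 + 1/(n+1) : ℝ) : ℂ)).im = 0 := (hgpos _ hpos).1
    show conj' (g (conj' _)) = _
    rw [Complex.conj_ofReal, Complex.conj_eq_iff_im.mpr him]
  intro z hz
  have hz' : conj' z ∈ Complex.slitPlane := my_conj_mem hz
  have := heq hz
  simp only at this
  rw [← this, Complex.conj_conj]

include hg hgim in
lemma my_dicho : (∀ z ∈ Complex.slitPlane, g z = g 1) ∨ (∀ z, 0 < z.im → 0 < (g z).im) := by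
  by_cases hex : ∃ z₀ : ℂ, 0 < z₀.im ∧ (g z₀).im = 0
  · left
    obtain ⟨z₀, hz₀, him0⟩ := hex
    have hUopen : IsOpen {z : ℂ | 0 < z.im} := isOpen_lt continuous_const Complex.continuous_im
    have hUconv : Convex ℝ {z : ℂ | 0 < z.im} := convex_halfSpace_im_gt 0
    have hUsub : {z : ℂ | 0 < z.im} ⊆ Complex.slitPlane := fun z hz => Or.inr (ne_of_gt hz)
    have hre : ∀ z : ℂ, (Complex.I * g z).re = -(g z).im := by intro z; simp [Complex.mul_re]
    have hdiff : DifferentiableOn ℂ (fun z => Complex.exp (Complex.I * g z)) {z : ℂ | 0 < z.im} :=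
      ((differentiableOn_const _).mul (hg.mono hUsub)).cexp
    have hmax : IsMaxOn (norm ∘ fun z => Complex.exp (Complex.I * g z)) {z : ℂ | 0 < z.im} z₀ := by
      intro z hz
      simp only [Function.comp_apply, Complex.norm_exp, hre, him0]
      exact Real.exp_le_exp.mpr (by simpa using hgim z hz)
    have heq := Complex.eqOn_of_isPreconnected_of_isMaxOn_norm hUconv.isPreconnected hUopen
      hdiff hz₀ hmax
    have him : ∀ z ∈ {z : ℂ | 0 < z.im}, (g z).im = 0 := by
      intro z hz
      have h1 := congrArg norm (heq hz)
      simp only [Complex.norm_exp, Function.const_apply, hre, him0] at h1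
      have := Real.exp_injective h1
      linarith
    have han : AnalyticOnNhd ℂ g {z : ℂ | 0 < z.im} :=
      fun z hz => (hg.analyticOnNhd Complex.isOpen_slitPlane) z (hUsub hz)
    rcases han.is_constant_or_isOpen hUconv.isPreconnected with ⟨w, hw⟩ | hopen
    · have han2 : AnalyticOnNhd ℂ g Complex.slitPlane := hg.analyticOnNhd Complex.isOpen_slitPlane
      have heq2 : EqOn g (fun _ => w) Complex.slitPlane := by
        apply han2.eqOn_of_preconnected_of_frequently_eq analyticOnNhd_const my_preconn
          (hUsub hz₀)
        have hev : ∀ᶠ z in 𝓝[≠] z₀, g z = w := by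
          filter_upwards [nhdsWithin_le_nhds (hUopen.mem_nhds hz₀)] with z hz using hw z hz
        exact hev.frequently
      intro z hz
      rw [heq2 hz, heq2 Complex.one_mem_slitPlane]
    · exfalso
      have himg : IsOpen (g '' {z : ℂ | 0 < z.im}) := hopen _ (subset_refl _) hUopen
      obtain ⟨ε, hε, hball⟩ := Metric.isOpen_iff.mp himg (g z₀) (mem_image_of_mem _ hz₀)
      have hmem : g z₀ + ((ε/2 : ℝ) : ℂ) * Complex.I ∈ Metric.ball (g z₀) ε := by
        simp only [Metric.mem_ball, Complex.dist_eq, add_sub_cancel_left]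
        rw [norm_mul, Complex.norm_I, mul_one, Complex.norm_real, Real.norm_eq_abs, abs_of_pos (by linarith)]
        linarith
      obtain ⟨z, hzU, hgz⟩ := hball hmem
      have h0 := him z hzU
      rw [hgz] at h0
      simp only [Complex.add_im, Complex.mul_im, Complex.I_im, Complex.I_re,
        Complex.ofReal_re, Complex.ofReal_im, him0] at h0
      simp at h0
      linarith
  · right
    push_neg at hex
    intro z hz
    exact lt_of_le_of_ne (hgim z hz) (fun hcon => hex z hz hcon.symm)

include hg hgpos hgim in
lemma my_pos_real (hne : ¬ ∀ z ∈ Complex.slitPlane, g z = g 1) :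
    ∀ x : ℝ, 0 < x → 0 < (g (x : ℂ)).re := by
  intro x hx
  rcases (hgpos x hx).2.eq_or_lt with h | h
  swap
  · exact h
  exfalso
  have hgx : g (x:ℂ) = 0 := Complex.ext h.symm (hgpos x hx).1
  have hxS : (x:ℂ) ∈ Complex.slitPlane := Complex.ofReal_mem_slitPlane.2 hx
  have han : AnalyticAt ℂ g (x:ℂ) := (hg.analyticOnNhd Complex.isOpen_slitPlane) _ hxS
  have hnotev : ¬ ∀ᶠ z in 𝓝 (x:ℂ), g z = 0 := by
    intro hev
    apply hne
    have heq : EqOn g (fun _ => (0:ℂ)) Complex.slitPlane :=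
      (hg.analyticOnNhd Complex.isOpen_slitPlane).eqOn_of_preconnected_of_frequently_eq
        analyticOnNhd_const my_preconn hxS
        ((hev.filter_mono nhdsWithin_le_nhds).frequently)
    intro z hz; rw [heq hz, heq Complex.one_mem_slitPlane]
  have hfin : analyticOrderAt g (x:ℂ) ≠ ⊤ := fun hcon => hnotev (analyticOrderAt_eq_top.mp hcon)
  obtain ⟨n, hn⟩ := WithTop.ne_top_iff_exists.mp hfin
  obtain ⟨h', hanh, hh0, hev⟩ := (han.analyticOrderAt_eq_natCast (n := n)).mp hn.symm
  have hevmul : ∀ᶠ z in 𝓝 (x:ℂ), g z = (z - ↑x) ^ n * h' z := by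
    filter_upwards [hev] with z hz using by simpa [smul_eq_mul] using hz
  set c : ℂ := h' (x:ℂ) with hc
  -- facts about h' on the real axis to the right of x
  have hright : ∀ᶠ t in 𝓝[>] x, (h' ((t:ℝ):ℂ)).im = 0 ∧ 0 ≤ (h' ((t:ℝ):ℂ)).re := by
    have hmap : Tendsto (fun t : ℝ => ((t:ℝ):ℂ)) (𝓝[>] x) (𝓝 (x:ℂ)) :=
      (Complex.continuous_ofReal.tendsto x).mono_left nhdsWithin_le_nhds
    filter_upwards [hmap.eventually hevmul, self_mem_nhdsWithin] with t hfac htx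
    have htx' : x < t := htx
    have ht0 : 0 < t := lt_trans hx htx' 
    have hre : (((t:ℝ):ℂ) - (x:ℂ)) ^ n = (((t - x)^n : ℝ) : ℂ) := by push_cast; ring
    rw [hre] at hfac
    have him0 : (g ((t:ℝ):ℂ)).im = 0 := (hgpos t ht0).1
    have hre0 : 0 ≤ (g ((t:ℝ):ℂ)).re := (hgpos t ht0).2
    have hpow : (0:ℝ) < (t - x)^n := pow_pos (by linarith) n
    have him' : (g ((t:ℝ):ℂ)).im = (t-x)^n * (h' ((t:ℝ):ℂ)).im := by
      rw [hfac]; simp only [Complex.mul_im, Complex.ofReal_re, Complex.ofReal_im]; ring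
    have hre' : (g ((t:ℝ):ℂ)).re = (t-x)^n * (h' ((t:ℝ):ℂ)).re := by
      rw [hfac]; simp only [Complex.mul_re, Complex.ofReal_re, Complex.ofReal_im]; ring
    rw [him'] at him0
    rw [hre'] at hre0
    exact ⟨(mul_eq_zero.mp him0).resolve_left (ne_of_gt hpow),
      nonneg_of_mul_nonneg_right hre0 hpow⟩
  have htlim : Tendsto (fun t : ℝ => h' ((t:ℝ):ℂ)) (𝓝[>] x) (𝓝 c) :=
    (hanh.continuousAt.tendsto).comp
      ((Complex.continuous_ofReal.tendsto x).mono_left nhdsWithin_le_nhds)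
  have hcim : c.im = 0 := by
    have h2 : Tendsto (fun t : ℝ => (h' ((t:ℝ):ℂ)).im) (𝓝[>] x) (𝓝 c.im) :=
      (Complex.continuous_im.tendsto c).comp htlim
    have h3 : Tendsto (fun t : ℝ => (h' ((t:ℝ):ℂ)).im) (𝓝[>] x) (𝓝 0) := by
      refine Tendsto.congr' ?_ tendsto_const_nhds
      filter_upwards [hright] with t ht using ht.1.symm
    exact tendsto_nhds_unique h2 h3
  have hcre : 0 < c.re := by
    have h2 : Tendsto (fun t : ℝ => (h' ((t:ℝ):ℂ)).re) (𝓝[>] x) (𝓝 c.re) :=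
      (Complex.continuous_re.tendsto c).comp htlim
    have h4 : 0 ≤ c.re := ge_of_tendsto h2 (by filter_upwards [hright] with t ht using ht.2)
    rcases h4.eq_or_lt with h5 | h5
    · exfalso; exact hh0 (Complex.ext h5.symm hcim)
    · exact h5
  -- n is nonzero
  have hn0 : n ≠ 0 := by
    intro hcon
    have := hevmul.self_of_nhds
    rw [hcon, pow_zero, one_mul, hgx] at this
    exact hh0 this.symm
  -- n is even
  have hneven : Even n := by
    rcases Nat.even_or_odd n with he | ho
    · exact he
    exfalso
    -- look to the left of x
    have hleft : ∀ᶠ t in 𝓝[<] x, (h' ((t:ℝ):ℂ)).re ≤ 0 := by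
      have hmap : Tendsto (fun t : ℝ => ((t:ℝ):ℂ)) (𝓝[<] x) (𝓝 (x:ℂ)) :=
        (Complex.continuous_ofReal.tendsto x).mono_left nhdsWithin_le_nhds
      have hx2 : ∀ᶠ t in 𝓝[<] x, 0 < t :=
        eventually_nhdsWithin_of_eventually_nhds (eventually_gt_nhds hx)
      filter_upwards [hmap.eventually hevmul, self_mem_nhdsWithin, hx2] with t hfac htx ht0
      have htx' : t < x := htx
      have hre : (((t:ℝ):ℂ) - (x:ℂ)) ^ n = (((t - x)^n : ℝ) : ℂ) := by push_cast; ring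
      rw [hre] at hfac
      have hre0 : 0 ≤ (g ((t:ℝ):ℂ)).re := (hgpos t ht0).2
      have hre' : (g ((t:ℝ):ℂ)).re = (t-x)^n * (h' ((t:ℝ):ℂ)).re := by
        rw [hfac]; simp only [Complex.mul_re, Complex.ofReal_re, Complex.ofReal_im]; ring
      rw [hre'] at hre0
      have hpow : (t - x)^n < 0 := ho.pow_neg (by linarith)
      by_contra hcon
      push_neg at hcon
      nlinarith
    have hmaplt : Tendsto (fun t : ℝ => h' ((t:ℝ):ℂ)) (𝓝[<] x) (𝓝 c) :=
      (hanh.continuousAt.tendsto).comp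
        ((Complex.continuous_ofReal.tendsto x).mono_left nhdsWithin_le_nhds)
    have h2 : Tendsto (fun t : ℝ => (h' ((t:ℝ):ℂ)).re) (𝓝[<] x) (𝓝 c.re) :=
      (Complex.continuous_re.tendsto c).comp hmaplt
    have : c.re ≤ 0 := le_of_tendsto h2 hleft
    linarith
  have hn2 : 2 ≤ n := by
    rcases hneven with ⟨k, hk⟩
    omega
  -- the contradictory direction
  set θ : ℝ := 3 * Real.pi / (2 * n) with hθ
  have hπ := Real.pi_pos
  have hθpos : 0 < θ := by
    apply div_pos (by linarith)
    positivity
  have hθlt : θ < Real.pi := by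
    rw [hθ, div_lt_iff₀ (by positivity)]
    have : (2:ℝ) ≤ n := by exact_mod_cast hn2
    nlinarith
  have hnθ : (n:ℝ) * θ = 3 * Real.pi / 2 := by
    rw [hθ]
    field_simp
  have hsin : Real.sin ((n:ℝ) * θ) = -1 := by
    rw [hnθ, show (3 * Real.pi / 2 : ℝ) = Real.pi + Real.pi/2 by ring, Real.sin_add]
    simp
  have hsinθ : 0 < Real.sin θ := Real.sin_pos_of_pos_of_lt_pi hθpos hθlt
  -- the curve ε ↦ x + ε e^{iθ}
  set dir : ℂ := Complex.exp ((θ:ℂ) * Complex.I) with hdir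
  have hcurve : Tendsto (fun ε : ℝ => (x:ℂ) + (ε:ℂ) * dir) (𝓝[>] 0) (𝓝 (x:ℂ)) := by
    have : Continuous (fun ε : ℝ => (x:ℂ) + (ε:ℂ) * dir) :=
      continuous_const.add (Complex.continuous_ofReal.mul continuous_const)
    have h0 := (this.tendsto 0).mono_left (nhdsWithin_le_nhds (s := Ioi (0:ℝ)))
    simpa using h0
  have hF : Tendsto
      (fun ε : ℝ => (Complex.exp ((((n:ℝ) * θ : ℝ):ℂ) * Complex.I) * h' ((x:ℂ) + (ε:ℂ) * dir)).im)
      (𝓝[>] 0) (𝓝 (Real.sin ((n:ℝ)*θ) * c.re)) := by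
    have hcont : Tendsto (fun ε : ℝ => h' ((x:ℂ) + (ε:ℂ) * dir)) (𝓝[>] 0) (𝓝 c) :=
      hanh.continuousAt.tendsto.comp hcurve
    have h2 := (Complex.continuous_im.tendsto _).comp
      (((continuous_const (y := Complex.exp ((((n:ℝ) * θ : ℝ):ℂ) * Complex.I))).tendsto _).mono_left
        (nhdsWithin_le_nhds) |>.mul hcont)
    have h3 : (Complex.exp ((((n:ℝ) * θ : ℝ):ℂ) * Complex.I) * c).im = Real.sin ((n:ℝ)*θ) * c.re := by
      rw [Complex.exp_mul_I, ← Complex.ofReal_cos, ← Complex.ofReal_sin]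
      simp only [Complex.add_im, Complex.mul_im, Complex.add_re, Complex.mul_re,
        Complex.ofReal_re, Complex.ofReal_im, Complex.I_re, Complex.I_im]
      rw [hcim]
      ring
    rw [← h3]
    exact h2
  have hFneg : ∀ᶠ ε : ℝ in 𝓝[>] 0,
      (Complex.exp ((((n:ℝ) * θ : ℝ):ℂ) * Complex.I) * h' ((x:ℂ) + (ε:ℂ) * dir)).im < 0 := by
    apply hF.eventually_lt_const
    rw [hsin]
    nlinarith
  obtain ⟨ε, hfac, hFε, hεpos⟩ :=
    ((hcurve.eventually hevmul).and (hFneg.and self_mem_nhdsWithin)).exists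
  have hεpos' : (0:ℝ) < ε := hεpos
  -- the point
  set z : ℂ := (x:ℂ) + (ε:ℂ) * dir with hz
  have hzim : 0 < z.im := by
    rw [hz, hdir, Complex.exp_mul_I, ← Complex.ofReal_cos, ← Complex.ofReal_sin]
    simp only [Complex.add_im, Complex.ofReal_im, Complex.mul_im, Complex.add_re,
      Complex.ofReal_re, Complex.I_re, Complex.I_im, Complex.mul_re]
    have : (0:ℝ) < ε * Real.sin θ := by positivity
    simp only [zero_add]
    nlinarith [Real.sin_pos_of_pos_of_lt_pi hθpos hθlt]
  have hgz : (g z).im = ε^n * (Complex.exp ((((n:ℝ) * θ : ℝ):ℂ) * Complex.I) * h' z).im := by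
    have hzx : z - (x:ℂ) = (ε:ℂ) * dir := by rw [hz]; ring
    have hpowz : (z - (x:ℂ))^n = ((ε^n : ℝ):ℂ) * Complex.exp ((((n:ℝ) * θ : ℝ):ℂ) * Complex.I) := by
      rw [hzx, mul_pow, hdir, ← Complex.exp_nat_mul]
      push_cast
      ring_nf
    rw [hfac, hpowz, mul_assoc]
    simp only [Complex.mul_im, Complex.ofReal_re, Complex.ofReal_im]
    ring
  have : (g z).im < 0 := by
    rw [hgz]
    have : (0:ℝ) < ε^n := pow_pos hεpos' n
    nlinarith
  linarith [hgim z hzim]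

include hg hgpos hgim in
lemma my_PL (hne : ¬ ∀ z ∈ Complex.slitPlane, g z = g 1) :
    ∀ z : ℂ, 0 < z.im → Complex.arg (g z) ≤ Complex.arg z := by
  intro z₀ hz₀
  have hπ := Real.pi_pos
  have hpos_im := (my_dicho hg hgim).resolve_left hne
  have hpos_re := my_pos_real hg hgpos hgim hne
  set θ := Complex.arg z₀ with hθdef
  have hθ1 : 0 < θ := by
    rcases (Complex.arg_nonneg_iff.mpr hz₀.le).eq_or_lt with h | h
    · exfalso
      have := Complex.arg_eq_zero_iff.mp h.symm
      linarith [this.2, hz₀]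
    · exact h
  have hθ2 : θ < Real.pi := by
    rcases (Complex.arg_le_pi z₀).eq_or_lt with h | h
    · exfalso
      have := Complex.arg_eq_pi_iff.mp h
      linarith [this.2, hz₀]
    · exact h
  have key : ∀ δ : ℝ, 0 < δ → δ < Real.pi - θ → Complex.arg (g z₀) ≤ θ + δ := by
    intro δ hδ hδθ
    set b : ℝ := Real.pi - δ with hbdef
    have hb : 0 < b := by simp only [hbdef]; linarith
    have hmem : ∀ w : ℂ, 0 ≤ w.im → w.im ≤ b →
        Complex.exp w ∈ Complex.slitPlane ∧ g (Complex.exp w) ∈ Complex.slitPlane := by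
      intro w h1 h2
      rcases h1.eq_or_lt with h0 | h0
      · have hwre : w = ((w.re : ℝ) : ℂ) := Complex.ext (by simp) (by simp [← h0])
        have hwe : Complex.exp w = ((Real.exp w.re : ℝ) : ℂ) := by
          rw [Complex.ofReal_exp, ← hwre]
        rw [hwe]
        constructor
        · exact Complex.ofReal_mem_slitPlane.2 (Real.exp_pos _)
        · exact Or.inl (hpos_re _ (Real.exp_pos _))
      · have him : 0 < (Complex.exp w).im := by
          rw [Complex.exp_im]
          apply mul_pos (Real.exp_pos _)
          apply Real.sin_pos_of_pos_of_lt_pi h0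
          calc w.im ≤ b := h2
          _ < Real.pi := by simp only [hbdef]; linarith
        exact ⟨Or.inr (ne_of_gt him), Or.inr (ne_of_gt (hpos_im _ him))⟩
    set Φ : ℂ → ℂ := fun w =>
      Complex.exp (-Complex.I * (Complex.log (g (Complex.exp w)) - w)) with hΦdef
    have habs : ∀ w : ℂ,
        ‖Φ w‖ = Real.exp (Complex.arg (g (Complex.exp w)) - w.im) := by
      intro w
      rw [hΦdef]
      simp only []
      rw [Complex.norm_exp]
      congr 1
      rw [← Complex.log_im (g (Complex.exp w))]
      simp only [Complex.neg_re, Complex.neg_im, Complex.mul_re, Complex.I_re, Complex.I_im,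
        Complex.sub_re, Complex.sub_im]
      ring
    have hdiffat : ∀ w : ℂ, 0 ≤ w.im → w.im ≤ b → DifferentiableAt ℂ Φ w := by
      intro w h1 h2
      obtain ⟨hz, hgz⟩ := hmem w h1 h2
      apply DifferentiableAt.cexp
      apply DifferentiableAt.mul (differentiableAt_const _)
      apply DifferentiableAt.sub _ differentiableAt_id
      have hdg : DifferentiableAt ℂ g (Complex.exp w) :=
        hg.differentiableAt (Complex.isOpen_slitPlane.mem_nhds hz)
      exact ((Complex.differentiableAt_log hgz).comp _ hdg).comp w
        Complex.differentiable_exp.differentiableAt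
    have hclosure : closure (Complex.im ⁻¹' Ioo 0 b) ⊆ Complex.im ⁻¹' Icc 0 b :=
      closure_minimal (preimage_mono Ioo_subset_Icc_self)
        (isClosed_Icc.preimage Complex.continuous_im)
    have hfd : DiffContOnCl ℂ Φ (Complex.im ⁻¹' Ioo 0 b) := by
      refine ⟨fun w hw => (hdiffat w hw.1.le hw.2.le).differentiableWithinAt, fun w hw => ?_⟩
      have hw' := hclosure hw
      exact (hdiffat w hw'.1 hw'.2).continuousAt.continuousWithinAt
    have hstrip : ‖Φ (Complex.log z₀)‖ ≤ Real.exp δ := by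
      apply PhragmenLindelof.horizontal_strip hfd
      · refine ⟨0, by rw [sub_zero]; exact div_pos hπ hb, Real.pi, ?_⟩
        apply Asymptotics.IsBigO.of_bound 1
        filter_upwards [mem_inf_of_right (mem_principal_self _)] with w hw
        have hw' : (0:ℝ) < w.im ∧ w.im < b := hw
        rw [habs w]
        have harg := Complex.arg_le_pi (g (Complex.exp w))
        simp only [zero_mul, mul_zero, Real.exp_zero, mul_one, one_mul, Real.norm_eq_abs, Real.abs_exp]
        exact Real.exp_le_exp.mpr (by linarith [hw'.1])
      · intro w hwim
        rw [habs w, hwim]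
        have hwre : w = ((w.re : ℝ) : ℂ) := Complex.ext (by simp) (by simp [hwim])
        have hwe : Complex.exp w = ((Real.exp w.re : ℝ) : ℂ) := by
          rw [Complex.ofReal_exp, ← hwre]
        have harg : Complex.arg (g (Complex.exp w)) = 0 := by
          rw [hwe]
          exact Complex.arg_eq_zero_iff.mpr
            ⟨(hpos_re _ (Real.exp_pos _)).le, (hgpos _ (Real.exp_pos _)).1⟩
        rw [harg]
        simpa using Real.exp_le_exp.mpr hδ.le
      · intro w hwim
        rw [habs w, hwim]
        apply Real.exp_le_exp.mpr
        have harg := Complex.arg_le_pi (g (Complex.exp w))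
        simp only [hbdef]
        linarith
      · rw [Complex.log_im]
        exact Complex.arg_nonneg_iff.mpr hz₀.le
      · rw [Complex.log_im]
        simp only [hbdef]
        linarith
    have hz₀ne : z₀ ≠ 0 := by
      intro h0
      rw [h0] at hz₀
      simp at hz₀
    rw [habs _, Complex.exp_log hz₀ne, Complex.log_im] at hstrip
    have := Real.exp_le_exp.mp hstrip
    linarith
  by_contra hcon
  push_neg at hcon
  have hgap : 0 < (Complex.arg (g z₀) - θ) / 2 := by linarith
  set δ : ℝ := min ((Complex.arg (g z₀) - θ) / 2) ((Real.pi - θ) / 2) with hδdef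
  have hδ1 : 0 < δ := lt_min hgap (by linarith)
  have hδ2 : δ < Real.pi - θ := lt_of_le_of_lt (min_le_right _ _) (by linarith)
  have := key δ hδ1 hδ2
  have hle : δ ≤ (Complex.arg (g z₀) - θ) / 2 := min_le_left _ _
  linarith

include hg hgpos hgim in
lemma my_between (hne : ¬ ∀ z ∈ Complex.slitPlane, g z = g 1) :
    ∀ w ∈ Complex.slitPlane, g w ≠ 0 ∧
      min 0 (Complex.arg w) ≤ Complex.arg (g w) ∧
      Complex.arg (g w) ≤ max 0 (Complex.arg w) := by
  have hpos_im := (my_dicho hg hgim).resolve_left hne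
  have hpos_re := my_pos_real hg hgpos hgim hne
  have hPL := my_PL hg hgpos hgim hne
  intro w hwS
  rcases lt_trichotomy w.im 0 with hwim | hwim | hwim
  · -- lower half plane
    have hcw : (conj' w).im > 0 := by simp [Complex.conj_im]; linarith
    have hrefl := my_refl hg hgpos w hwS
    have hgim' : 0 < (g (conj' w)).im := hpos_im _ hcw
    rw [hrefl] at hgim'
    have hgwim : (g w).im < 0 := by
      simp only [Complex.conj_im] at hgim'
      linarith
    have hgw0 : g w ≠ 0 := fun h => by rw [h] at hgwim; simp at hgwim
    have hargneg : Complex.arg (g w) < 0 := Complex.arg_neg_iff.mpr hgwim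
    have hargwneg : Complex.arg w < 0 := Complex.arg_neg_iff.mpr hwim
    have h1 := hPL (conj' w) hcw
    rw [hrefl] at h1
    have hargconj1 : Complex.arg (conj' (g w)) = - Complex.arg (g w) := by
      rw [Complex.arg_conj]
      rw [if_neg]
      intro hcon
      have := Complex.arg_eq_pi_iff.mp hcon
      linarith [this.2]
    have hargconj2 : Complex.arg (conj' w) = - Complex.arg w := by
      rw [Complex.arg_conj]
      rw [if_neg]
      intro hcon
      have := Complex.arg_eq_pi_iff.mp hcon
      linarith [this.2]
    rw [hargconj1, hargconj2] at h1
    refine ⟨hgw0, ?_, ?_⟩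
    · calc min 0 (Complex.arg w) ≤ Complex.arg w := min_le_right _ _
      _ ≤ Complex.arg (g w) := by linarith
    · calc Complex.arg (g w) ≤ 0 := hargneg.le
      _ ≤ max 0 (Complex.arg w) := le_max_left _ _
  · -- real axis
    have hwre : 0 < w.re := by
      rcases hwS with h | h
      · exact h
      · exact absurd hwim h
    have hw : w = ((w.re : ℝ) : ℂ) := Complex.ext (by simp) (by simp [hwim])
    have hre' : 0 < (g w).re := by rw [hw]; exact hpos_re _ hwre
    have him' : (g w).im = 0 := by rw [hw]; exact (hgpos _ hwre).1
    have harg : Complex.arg (g w) = 0 := Complex.arg_eq_zero_iff.mpr ⟨hre'.le, him'⟩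
    refine ⟨fun h => by rw [h] at hre'; simp at hre', ?_, ?_⟩
    · rw [harg]; exact min_le_left _ _
    · rw [harg]; exact le_max_left _ _
  · -- upper half plane
    have hgwim : 0 < (g w).im := hpos_im _ hwim
    refine ⟨fun h => by rw [h] at hgwim; simp at hgwim, ?_, ?_⟩
    · calc min 0 (Complex.arg w) ≤ 0 := min_le_left _ _
      _ ≤ Complex.arg (g w) := Complex.arg_nonneg_iff.mpr hgwim.le
    · calc Complex.arg (g w) ≤ Complex.arg w := hPL w hwim
      _ ≤ max 0 (Complex.arg w) := le_max_right _ _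

end

theorem stmt_18 (f g : ℂ → ℂ)
    (hf : DifferentiableOn ℂ f {ξ : ℂ | 0 < ξ.re})
    (hfr : ∀ ξ ∈ {ξ : ℂ | 0 < ξ.re}, 0 ≤ (f ξ / ξ).re)
    (hg : DifferentiableOn ℂ g Complex.slitPlane)
    (hgpos : ∀ x : ℝ, 0 < x → (g (x : ℂ)).im = 0 ∧ 0 ≤ (g (x : ℂ)).re)
    (hgim : ∀ ξ : ℂ, 0 < ξ.im → 0 ≤ (g ξ).im)
    (hnd : ∀ ξ ∈ {ξ : ℂ | 0 < ξ.re}, f ξ ∈ Complex.slitPlane) :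
    DifferentiableOn ℂ (fun ξ : ℂ => g (f ξ)) {ξ : ℂ | 0 < ξ.re} ∧
    ∀ ξ ∈ {ξ : ℂ | 0 < ξ.re}, 0 ≤ (g (f ξ) / ξ).re := by
  constructor
  · exact hg.comp hf hnd
  intro ξ hξ
  have hξre : 0 < ξ.re := hξ
  have hξ0 : ξ ≠ 0 := by
    intro h
    rw [h] at hξre
    simp at hξre
  by_cases hconst : ∀ z ∈ Complex.slitPlane, g z = g 1
  · rw [hconst _ (hnd ξ hξ)]
    have hg1 := hgpos 1 one_pos
    rw [Complex.div_re]
    push_cast at hg1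
    have hns : 0 < Complex.normSq ξ := Complex.normSq_pos.mpr hξ0
    rw [hg1.1]
    simp only [zero_mul, zero_div, add_zero]
    exact div_nonneg (mul_nonneg hg1.2 hξre.le) hns.le
  · obtain ⟨hgw0, hmin, hmax⟩ := my_between hg hgpos hgim hconst (f ξ) (hnd ξ hξ)
    have hφ : |Complex.arg ξ| < Real.pi / 2 :=
      Complex.abs_arg_lt_pi_div_two_iff.mpr (Or.inl hξre)
    obtain ⟨hφ1, hφ2⟩ := abs_lt.mp hφ
    have hw0 : f ξ ≠ 0 := Complex.slitPlane_ne_zero (hnd ξ hξ)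
    have hcosβ : 0 ≤ Real.cos (Complex.arg (f ξ) - Complex.arg ξ) := by
      have h0 := hfr ξ hξ
      rw [my_re_div (f ξ) ξ hw0 hξ0] at h0
      have habs : 0 < ‖f ξ‖ / ‖ξ‖ :=
        div_pos (norm_pos_iff.mpr hw0) (norm_pos_iff.mpr hξ0)
      exact nonneg_of_mul_nonneg_right h0 habs
    have hβπ1 := Complex.arg_le_pi (f ξ)
    have hβπ2 := Complex.neg_pi_lt_arg (f ξ)
    have hπ := Real.pi_pos
    have hβ1 : Complex.arg (f ξ) - Complex.arg ξ ≤ Real.pi / 2 := by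
      by_contra hcon
      push_neg at hcon
      have : Real.cos (Complex.arg (f ξ) - Complex.arg ξ) < 0 :=
        Real.cos_neg_of_pi_div_two_lt_of_lt hcon (by linarith)
      linarith
    have hβ2 : -(Real.pi / 2) ≤ Complex.arg (f ξ) - Complex.arg ξ := by
      by_contra hcon
      push_neg at hcon
      have h1 : Real.cos (Complex.arg ξ - Complex.arg (f ξ)) < 0 := by
        apply Real.cos_neg_of_pi_div_two_lt_of_lt (by linarith) (by linarith)
      rw [← Real.cos_neg] at h1
      have : -(Complex.arg ξ - Complex.arg (f ξ)) = Complex.arg (f ξ) - Complex.arg ξ := by ring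
      rw [this] at h1
      linarith
    rw [my_re_div (g (f ξ)) ξ hgw0 hξ0]
    apply mul_nonneg (div_nonneg (norm_nonneg _) (norm_nonneg _))
    apply Real.cos_nonneg_of_mem_Icc
    constructor
    · rcases le_or_gt 0 (Complex.arg (f ξ)) with hb0 | hb0
      · have : min 0 (Complex.arg (f ξ)) = 0 := min_eq_left hb0
        rw [this] at hmin
        linarith
      · have : min 0 (Complex.arg (f ξ)) = Complex.arg (f ξ) := min_eq_right hb0.le
        rw [this] at hmin
        linarith
    · rcases le_or_gt 0 (Complex.arg (f ξ)) with hb0 | hb0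
      · have : max 0 (Complex.arg (f ξ)) = Complex.arg (f ξ) := max_eq_right hb0
        rw [this] at hmax
        linarith
      · have : max 0 (Complex.arg (f ξ)) = 0 := max_eq_left hb0.le
        rw [this] at hmax
        linarith
end
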